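/- Let ρ be a positive real number with ρ ≠ 1 and set β = (ρ+1)/(2(ρ−1)). Define the 2×2 matrices over A: L₀ = [[(1/2)·1 + K, −ρ⁻¹·S], [ρ·N, (1/2)·1 − K']], L₀ᵗ = [[(1/2)·1 − K, ρ⁻¹·S], [−ρ·N, (1/2)·1 + K']], CFK₀ = [[−2K, ((ρ+1)/ρ)·S], [−(1+ρ)·N, 2K']], CFK₀ᵗ = [[2K, −((ρ+1)/ρ)·S], [(1+ρ)·N, −2K']], R₀ = (1/(ρ+1))·[[1, 2S], [−2ρ·N, ρ·1]], and R₀ᵗ = (1/(ρ+1))·[[ρ·1, −2S], [2ρ·N, 1]]. Then L₀ᵗ·R₀·CFK₀ + CFK₀ᵗ·R₀ᵗ·L₀ = −(2(ρ−1)/(ρ+1)) · diag((−1 + 2K²)·(β·1 + K), (−1 + 2K'²)·(β·1 + K')); in particular the off-diagonal entries of this sum vanish. -/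

import Mathlib

set_option maxHeartbeats 2000000 in
theorem cross_terms_identity (A : Type*) [Ring A] [Algebra ℝ A]
    (S N K K' : A)
    (hSN : S * N = -(1/4 : ℝ) • (1 : A) + K ^ 2)
    (hNS : N * S = -(1/4 : ℝ) • (1 : A) + K' ^ 2)
    (hNK : N * K = K' * N)
    (hKS : K * S = S * K')
    (ρ : ℝ) (hρ : 0 < ρ) (hρ1 : ρ ≠ 1)
    (β : ℝ) (hβ : β = (ρ + 1) / (2 * (ρ - 1)))
    (L₀ L₀t CFK₀ CFK₀t R₀ R₀t : Matrix (Fin 2) (Fin 2) A)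
    (hL₀ : L₀ = !![(1/2 : ℝ) • (1 : A) + K, -(ρ⁻¹ • S); ρ • N, (1/2 : ℝ) • (1 : A) - K'])
    (hL₀t : L₀t = !![(1/2 : ℝ) • (1 : A) - K, ρ⁻¹ • S; -(ρ • N), (1/2 : ℝ) • (1 : A) + K'])
    (hCFK₀ : CFK₀ = !![-(2 : ℝ) • K, ((ρ + 1)/ρ) • S; -(1 + ρ) • N, (2 : ℝ) • K'])
    (hCFK₀t : CFK₀t = !![(2 : ℝ) • K, -((ρ + 1)/ρ) • S; (1 + ρ) • N, -(2 : ℝ) • K'])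
    (hR₀ : R₀ = (1/(ρ + 1)) • !![(1 : A), (2 : ℝ) • S; -(2*ρ) • N, ρ • (1 : A)])
    (hR₀t : R₀t = (1/(ρ + 1)) • !![ρ • (1 : A), -(2 : ℝ) • S; (2*ρ) • N, (1 : A)]) :
    L₀t * R₀ * CFK₀ + CFK₀t * R₀t * L₀ =
      (-(2*(ρ - 1)/(ρ + 1))) •
        !![(-(1 : A) + (2 : ℝ) • K ^ 2) * (β • (1 : A) + K), 0;
           0, (-(1 : A) + (2 : ℝ) • K' ^ 2) * (β • (1 : A) + K')] := by
  have hρ0 : ρ ≠ 0 := ne_of_gt hρ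
  have hρp1 : ρ + 1 ≠ 0 := by positivity
  have h1p : (1 + ρ : ℝ) ≠ 0 := by positivity
  have hm1 : (-2 + ρ * 2 : ℝ) ≠ 0 := by
    intro h; apply hρ1; linarith
  have hm2 : (-2 + ρ ^ 2 * 2 : ℝ) ≠ 0 := by
    intro h
    have h1 : (ρ - 1) * (ρ + 1) = 0 := by nlinarith
    rcases mul_eq_zero.mp h1 with h' | h'
    · exact hρ1 (by linarith)
    · exact hρp1 h'
  have hSN' : ∀ x : A, S * (N * x) = -(1/4 : ℝ) • x + K * (K * x) := by
    intro x; rw [← mul_assoc, hSN]; simp [add_mul, smul_mul_assoc, pow_two, mul_assoc]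
  have hNS' : ∀ x : A, N * (S * x) = -(1/4 : ℝ) • x + K' * (K' * x) := by
    intro x; rw [← mul_assoc, hNS]; simp [add_mul, smul_mul_assoc, pow_two, mul_assoc]
  have hNKr : K' * N = N * K := hNK.symm
  have hNK' : ∀ x : A, K' * (N * x) = N * (K * x) := by
    intro x; rw [← mul_assoc, ← hNK, mul_assoc]
  have hKS' : ∀ x : A, K * (S * x) = S * (K' * x) := by
    intro x; rw [← mul_assoc, hKS, mul_assoc]
  subst hβ hL₀ hL₀t hCFK₀ hCFK₀t hR₀ hR₀t
  ext i j
  fin_cases i <;> fin_cases j <;>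
    simp only [Matrix.mul_apply, Matrix.add_apply, Matrix.smul_apply, Fin.sum_univ_two,
      Fin.mk_zero, Fin.mk_one, Fin.isValue, Matrix.cons_val', Matrix.cons_val_zero, Matrix.cons_val_one, Matrix.head_cons,
      Matrix.head_fin_const, Matrix.empty_val', Matrix.cons_val_fin_one, Matrix.of_apply] <;>
    simp only [mul_add, add_mul, mul_sub, sub_mul, neg_mul, mul_neg, smul_mul_assoc,
      mul_smul_comm, smul_smul, one_mul, mul_one, smul_add, smul_sub, smul_neg, neg_neg,
      mul_assoc, pow_two, hSN, hNS, hNKr, hKS, hSN', hNS', hNK', hKS'] <;>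
    match_scalars
  all_goals try ring
  all_goals try field_simp
  all_goals try ring
  all_goals (have hm3 : (-1 + ρ : ℝ) ≠ 0 := fun h => hρ1 (by linarith); field_simp <;> ring)
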